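/- Let Ω ⊆ ℝ^N (N ≥ 2) be open, bounded and convex with 0 ∈ Ω, and let s > 0 satisfy that the closed ball B̄_s(0) ⊆ {x ∈ Ω : dist(x, ℝ^N ∖ Ω) > 4s}. For any r ∈ [0, s), the map H : E_{2,r}(Ω) × [0,1] → E_{2,r}(Ω), H(ξ_1, ξ_2, t) := ((1−t)ξ_1 + t·s·(ξ_1−ξ_2)/|ξ_1−ξ_2|, (1−t)ξ_2 + t·s·(ξ_2−ξ_1)/|ξ_1−ξ_2|), is well defined (takes values in E_{2,r}(Ω)) and is a homotopy from the identity of E_{2,r}(Ω) to ι_r ∘ ϱ_r; consequently E_{2,r}(Ω) is homotopy equivalent to S^{N−1}. -/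

import Mathlib

open Metric

/-- The space `E_{2,r}(Ω)` of pairs `(ξ₁, ξ₂) ∈ Ω²` with
`dist(ξ₁, ℝ^N ∖ Ω) > 4r`, `dist(ξ₂, ℝ^N ∖ Ω) > 2r` and `|ξ₂ − ξ₁| > 2r`. -/
def ETwo {N : ℕ} (r : ℝ) (Ω : Set (EuclideanSpace ℝ (Fin N))) :
    Set (EuclideanSpace ℝ (Fin N) × EuclideanSpace ℝ (Fin N)) :=
  {p | p.1 ∈ Ω ∧ p.2 ∈ Ω ∧ 4 * r < infDist p.1 Ωᶜ ∧ 2 * r < infDist p.2 Ωᶜ ∧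
    2 * r < dist p.2 p.1}

/-- Elementary inequality: a convex combination of two quantities `> c` is `> c`. -/
lemma auxComboGt {α β t c : ℝ} (ht0 : 0 ≤ t) (ht1 : t ≤ 1) (hα : c < α) (hβ : c < β) :
    c < (1 - t) * α + t * β := by
  rcases eq_or_lt_of_le ht0 with h | h
  · rw [← h]; ring_nf; linarith
  · nlinarith [mul_lt_mul_of_pos_left hβ h,
      mul_le_mul_of_nonneg_left hα.le (by linarith : (0:ℝ) ≤ 1 - t)]

/-- A point with positive distance to the complement of a set belongs to the set. -/
lemma auxMemOfPos {N : ℕ} {Ω : Set (EuclideanSpace ℝ (Fin N))}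
    {x : EuclideanSpace ℝ (Fin N)} (h : 0 < infDist x Ωᶜ) : x ∈ Ω := by
  by_contra hx
  rw [infDist_zero_of_mem (Set.mem_compl hx)] at h
  exact lt_irrefl 0 h

/-- Concavity of the distance to the complement of a convex set. -/
lemma auxInfDistCombo {N : ℕ} {Ω : Set (EuclideanSpace ℝ (Fin N))}
    (hΩc : Convex ℝ Ω) (hne : Ωᶜ.Nonempty)
    {a b : EuclideanSpace ℝ (Fin N)} {α β t : ℝ} (ht0 : 0 ≤ t) (ht1 : t ≤ 1)
    (hα : 0 < α) (hβ : 0 < β)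
    (ha : ball a α ⊆ Ω) (hb : ball b β ⊆ Ω) :
    (1 - t) * α + t * β ≤ infDist ((1 - t) • a + t • b) Ωᶜ := by
  set d : ℝ := (1 - t) * α + t * β with hd
  set c : EuclideanSpace ℝ (Fin N) := (1 - t) • a + t • b with hc
  have hd0 : 0 < d := by
    rcases eq_or_lt_of_le ht0 with h | h
    · rw [hd, ← h]; ring_nf; linarith
    · nlinarith
  have hball : ball c d ⊆ Ω := by
    intro z hz
    rw [mem_ball, dist_eq_norm] at hz
    set v : EuclideanSpace ℝ (Fin N) := z - c with hv
    have hx : a + (α / d) • v ∈ ball a α := by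
      rw [mem_ball, dist_eq_norm]
      simp only [add_sub_cancel_left, norm_smul, Real.norm_eq_abs,
        abs_of_nonneg (le_of_lt (div_pos hα hd0))]
      calc α / d * ‖v‖ < α / d * d := by
            apply mul_lt_mul_of_pos_left hz (div_pos hα hd0)
        _ = α := by field_simp
    have hy : b + (β / d) • v ∈ ball b β := by
      rw [mem_ball, dist_eq_norm]
      simp only [add_sub_cancel_left, norm_smul, Real.norm_eq_abs,
        abs_of_nonneg (le_of_lt (div_pos hβ hd0))]
      calc β / d * ‖v‖ < β / d * d := by
            apply mul_lt_mul_of_pos_left hz (div_pos hβ hd0)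
        _ = β := by field_simp
    have hz' : z = (1 - t) • (a + (α / d) • v) + t • (b + (β / d) • v) := by
      have : ((1 - t) * (α / d) + t * (β / d)) = 1 := by field_simp; exact hd.symm
      rw [smul_add, smul_add, smul_smul, smul_smul]
      rw [show (1-t) • a + ((1 - t) * (α / d)) • v + (t • b + (t * (β / d)) • v)
        = ((1-t) • a + t • b) + (((1 - t) * (α / d)) • v + (t * (β / d)) • v) from by abel]
      rw [← add_smul, this, one_smul, ← hc, hv]
      abel
    rw [hz']
    exact hΩc (ha hx) (hb hy) (by linarith) ht0 (by ring)
  by_contra hlt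
  push_neg at hlt
  obtain ⟨y, hyc, hyd⟩ := (infDist_lt_iff hne).mp hlt
  exact hyc (hball (by rwa [mem_ball, dist_comm]))

/-- Well-definedness of the straight-line homotopy on `E_{2,r}(Ω)`. -/
lemma auxMemETwo (N : ℕ)
    (Ω : Set (EuclideanSpace ℝ (Fin N)))
    (hΩc : Convex ℝ Ω) (s : ℝ) (hs : 0 < s)
    (hball : closedBall (0 : EuclideanSpace ℝ (Fin N)) s ⊆
      {x | x ∈ Ω ∧ 4 * s < infDist x Ωᶜ})
    (r : ℝ) (hr : 0 ≤ r) (hrs : r < s) :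
    ∀ p ∈ ETwo r Ω, ∀ t ∈ Set.Icc (0 : ℝ) 1,
      ((1 - t) • p.1 + (t * s) • (‖p.1 - p.2‖⁻¹ • (p.1 - p.2)),
        (1 - t) • p.2 + (t * s) • (‖p.1 - p.2‖⁻¹ • (p.2 - p.1))) ∈ ETwo r Ω := by
  -- complement is nonempty
  have hne : Ωᶜ.Nonempty := by
    rcases Set.eq_empty_or_nonempty Ωᶜ with h | h
    · exfalso
      have h0 : (0 : EuclideanSpace ℝ (Fin N)) ∈ closedBall (0:EuclideanSpace ℝ (Fin N)) s :=
        mem_closedBall_self hs.le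
      have := (hball h0).2
      rw [h] at this
      simp [infDist] at this
      linarith
    · exact h
  rintro p ⟨h1Ω, h2Ω, h1d, h2d, hdist⟩ t ⟨ht0, ht1⟩
  set d : EuclideanSpace ℝ (Fin N) := p.1 - p.2 with hdval
  have hn2 : (2:ℝ) * r < ‖d‖ := by
    rw [hdval, ← norm_sub_rev, ← dist_eq_norm]; exact hdist
  have hnpos : 0 < ‖d‖ := lt_of_le_of_lt (by positivity) hn2
  have hnne : ‖d‖ ≠ 0 := ne_of_gt hnpos
  -- the target points on the sphere of radius s
  set w₁ : EuclideanSpace ℝ (Fin N) := s • (‖d‖⁻¹ • d) with hw₁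
  set w₂ : EuclideanSpace ℝ (Fin N) := s • (‖d‖⁻¹ • (p.2 - p.1)) with hw₂
  have hw₂w₁ : w₂ = -w₁ := by
    rw [hw₂, hw₁, hdval, ← neg_sub p.1 p.2, smul_neg, smul_neg]
  have hnw₁ : ‖w₁‖ = s := by
    rw [hw₁, norm_smul, norm_smul, Real.norm_eq_abs, Real.norm_eq_abs,
      abs_of_pos hs, abs_of_nonneg (inv_nonneg.mpr hnpos.le), inv_mul_cancel₀ hnne, mul_one]
  have hnw₂ : ‖w₂‖ = s := by rw [hw₂w₁, norm_neg, hnw₁]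
  have hw₁mem := hball (by rw [mem_closedBall, dist_zero_right, hnw₁])
  have hw₂mem := hball (by rw [mem_closedBall, dist_zero_right, hnw₂])
  have hsmul₁ : (t * s) • (‖d‖⁻¹ • d) = t • w₁ := by rw [hw₁, mul_smul]
  have hsmul₂ : (t * s) • (‖d‖⁻¹ • (p.2 - p.1)) = t • w₂ := by rw [hw₂, mul_smul]
  -- distances to the complement
  have h1pos : 0 < infDist p.1 Ωᶜ := lt_of_le_of_lt (by positivity) h1d
  have h2pos : 0 < infDist p.2 Ωᶜ := lt_of_le_of_lt (by positivity) h2d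
  have hw₁pos : 0 < infDist w₁ Ωᶜ := lt_trans (by positivity) hw₁mem.2
  have hw₂pos : 0 < infDist w₂ Ωᶜ := lt_trans (by positivity) hw₂mem.2
  have key₁ : 4 * r < infDist ((1 - t) • p.1 + t • w₁) Ωᶜ := by
    refine lt_of_lt_of_le ?_
      (auxInfDistCombo hΩc hne ht0 ht1 h1pos hw₁pos
        ball_infDist_compl_subset ball_infDist_compl_subset)
    exact auxComboGt ht0 ht1 h1d (by linarith [hw₁mem.2])
  have key₂ : 2 * r < infDist ((1 - t) • p.2 + t • w₂) Ωᶜ := by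
    refine lt_of_lt_of_le ?_
      (auxInfDistCombo hΩc hne ht0 ht1 h2pos hw₂pos
        ball_infDist_compl_subset ball_infDist_compl_subset)
    exact auxComboGt ht0 ht1 h2d (by linarith [hw₂mem.2])
  -- distance between the two moved points
  have keyd : 2 * r < dist ((1 - t) • p.2 + t • w₂) ((1 - t) • p.1 + t • w₁) := by
    have hveq : ((1 - t) • p.2 + t • w₂) - ((1 - t) • p.1 + t • w₁)
        = ((1 - t) + 2 * (t * s) * ‖d‖⁻¹) • (p.2 - p.1) := by
      rw [hw₂, hw₁, hdval, ← neg_sub p.1 p.2]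
      module
    have hcoef : 0 ≤ (1 - t) + 2 * (t * s) * ‖d‖⁻¹ := by
      have h2' : 0 ≤ 2 * (t * s) * ‖d‖⁻¹ := by positivity
      linarith
    have hnorm2 : ‖p.2 - p.1‖ = ‖d‖ := by rw [hdval, norm_sub_rev]
    rw [dist_eq_norm, hveq, norm_smul, Real.norm_eq_abs, abs_of_nonneg hcoef, hnorm2]
    have : ((1 - t) + 2 * (t * s) * ‖d‖⁻¹) * ‖d‖ = (1 - t) * ‖d‖ + t * (2 * s) := by
      field_simp
    rw [this]
    exact auxComboGt ht0 ht1 hn2 (by linarith)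
  refine ⟨?_, ?_, ?_, ?_, ?_⟩
  · simpa [hsmul₁] using auxMemOfPos (lt_of_le_of_lt (by positivity : (0:ℝ) ≤ 4 * r)
      (by simpa using key₁))
  · simpa [hsmul₂] using auxMemOfPos (lt_of_le_of_lt (by positivity : (0:ℝ) ≤ 2 * r)
      (by simpa using key₂))
  · simpa [hsmul₁] using key₁
  · simpa [hsmul₂] using key₂
  · simpa [hsmul₁, hsmul₂] using keyd

/-- The straight-line map `H((ξ₁,ξ₂),t)` pushing `ξ₁, ξ₂` to antipodal points at distance
`2s` is well defined on `E_{2,r}(Ω)`, gives a homotopy from the identity to `ι_r ∘ ϱ_r`,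
and consequently `E_{2,r}(Ω)` is homotopy equivalent to the sphere `S^{N−1}`. -/
theorem eTwo_homotopy_equiv_sphere (N : ℕ) (hN : 2 ≤ N)
    (Ω : Set (EuclideanSpace ℝ (Fin N)))
    (hΩo : IsOpen Ω) (hΩb : Bornology.IsBounded Ω) (hΩc : Convex ℝ Ω)
    (h0 : (0 : EuclideanSpace ℝ (Fin N)) ∈ Ω) (s : ℝ) (hs : 0 < s)
    (hball : closedBall (0 : EuclideanSpace ℝ (Fin N)) s ⊆
      {x | x ∈ Ω ∧ 4 * s < infDist x Ωᶜ})
    (r : ℝ) (hr : 0 ≤ r) (hrs : r < s) :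
    (∀ p ∈ ETwo r Ω, ∀ t ∈ Set.Icc (0 : ℝ) 1,
      ((1 - t) • p.1 + (t * s) • (‖p.1 - p.2‖⁻¹ • (p.1 - p.2)),
        (1 - t) • p.2 + (t * s) • (‖p.1 - p.2‖⁻¹ • (p.2 - p.1))) ∈ ETwo r Ω) ∧
    (∃ H : C(↥(ETwo r Ω) × unitInterval, ↥(ETwo r Ω)),
      (∀ (q : ↥(ETwo r Ω)) (t : unitInterval),
        ((H (q, t) : EuclideanSpace ℝ (Fin N) × EuclideanSpace ℝ (Fin N)))
          = ((1 - (t : ℝ)) • (q : EuclideanSpace ℝ (Fin N) × EuclideanSpace ℝ (Fin N)).1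
                + ((t : ℝ) * s) • (‖(q : EuclideanSpace ℝ (Fin N) × EuclideanSpace ℝ (Fin N)).1 - (q : EuclideanSpace ℝ (Fin N) × EuclideanSpace ℝ (Fin N)).2‖⁻¹
                    • ((q : EuclideanSpace ℝ (Fin N) × EuclideanSpace ℝ (Fin N)).1 - (q : EuclideanSpace ℝ (Fin N) × EuclideanSpace ℝ (Fin N)).2)),
              (1 - (t : ℝ)) • (q : EuclideanSpace ℝ (Fin N) × EuclideanSpace ℝ (Fin N)).2
                + ((t : ℝ) * s) • (‖(q : EuclideanSpace ℝ (Fin N) × EuclideanSpace ℝ (Fin N)).1 - (q : EuclideanSpace ℝ (Fin N) × EuclideanSpace ℝ (Fin N)).2‖⁻¹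
                    • ((q : EuclideanSpace ℝ (Fin N) × EuclideanSpace ℝ (Fin N)).2 - (q : EuclideanSpace ℝ (Fin N) × EuclideanSpace ℝ (Fin N)).1)))) ∧
      (∀ q : ↥(ETwo r Ω), H (q, 0) = q) ∧
      (∀ q : ↥(ETwo r Ω),
        ((H (q, 1) : EuclideanSpace ℝ (Fin N) × EuclideanSpace ℝ (Fin N)))
          = (s • (‖(q : EuclideanSpace ℝ (Fin N) × EuclideanSpace ℝ (Fin N)).1 - (q : EuclideanSpace ℝ (Fin N) × EuclideanSpace ℝ (Fin N)).2‖⁻¹ • ((q : EuclideanSpace ℝ (Fin N) × EuclideanSpace ℝ (Fin N)).1 - (q : EuclideanSpace ℝ (Fin N) × EuclideanSpace ℝ (Fin N)).2)),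
              -(s • (‖(q : EuclideanSpace ℝ (Fin N) × EuclideanSpace ℝ (Fin N)).1 - (q : EuclideanSpace ℝ (Fin N) × EuclideanSpace ℝ (Fin N)).2‖⁻¹
                  • ((q : EuclideanSpace ℝ (Fin N) × EuclideanSpace ℝ (Fin N)).1 - (q : EuclideanSpace ℝ (Fin N) × EuclideanSpace ℝ (Fin N)).2)))))) ∧
    Nonempty (ContinuousMap.HomotopyEquiv ↥(ETwo r Ω)
      ↥(sphere (0 : EuclideanSpace ℝ (Fin N)) 1)) := by
  
  have part1 := auxMemETwo N Ω hΩc s hs hball r hr hrs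
  -- norms are nonvanishing on E
  have hnq : ∀ q : ↥(ETwo r Ω), ‖(q : (EuclideanSpace ℝ (Fin N))×(EuclideanSpace ℝ (Fin N))).1 - (q : (EuclideanSpace ℝ (Fin N))×(EuclideanSpace ℝ (Fin N))).2‖ ≠ 0 := by
    intro q
    have h := q.2.2.2.2.2
    have h' : (0:ℝ) < dist (q : (EuclideanSpace ℝ (Fin N))×(EuclideanSpace ℝ (Fin N))).2 (q : (EuclideanSpace ℝ (Fin N))×(EuclideanSpace ℝ (Fin N))).1 :=
      lt_of_le_of_lt (by positivity) h
    rw [dist_eq_norm, norm_sub_rev] at h'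
    exact ne_of_gt h'
  -- continuity of the homotopy formula
  have ht : Continuous fun x : ↥(ETwo r Ω) × unitInterval => (x.2 : ℝ) := by fun_prop
  have h1 : Continuous fun x : ↥(ETwo r Ω) × unitInterval => (x.1 : (EuclideanSpace ℝ (Fin N))×(EuclideanSpace ℝ (Fin N))).1 := by fun_prop
  have h2 : Continuous fun x : ↥(ETwo r Ω) × unitInterval => (x.1 : (EuclideanSpace ℝ (Fin N))×(EuclideanSpace ℝ (Fin N))).2 := by fun_prop
  have hdc : Continuous fun x : ↥(ETwo r Ω) × unitInterval =>
      (x.1 : (EuclideanSpace ℝ (Fin N))×(EuclideanSpace ℝ (Fin N))).1 - (x.1 : (EuclideanSpace ℝ (Fin N))×(EuclideanSpace ℝ (Fin N))).2 := h1.sub h2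
  have hinv : Continuous fun x : ↥(ETwo r Ω) × unitInterval =>
      ‖(x.1 : (EuclideanSpace ℝ (Fin N))×(EuclideanSpace ℝ (Fin N))).1 - (x.1 : (EuclideanSpace ℝ (Fin N))×(EuclideanSpace ℝ (Fin N))).2‖⁻¹ := hdc.norm.inv₀ (fun x => hnq x.1)
  have hcont : Continuous (fun x : ↥(ETwo r Ω) × unitInterval =>
      ((1 - (x.2:ℝ)) • (x.1 : (EuclideanSpace ℝ (Fin N))×(EuclideanSpace ℝ (Fin N))).1 + ((x.2:ℝ) * s) • (‖(x.1 : (EuclideanSpace ℝ (Fin N))×(EuclideanSpace ℝ (Fin N))).1 - (x.1 : (EuclideanSpace ℝ (Fin N))×(EuclideanSpace ℝ (Fin N))).2‖⁻¹ • ((x.1 : (EuclideanSpace ℝ (Fin N))×(EuclideanSpace ℝ (Fin N))).1 - (x.1 : (EuclideanSpace ℝ (Fin N))×(EuclideanSpace ℝ (Fin N))).2)),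
       (1 - (x.2:ℝ)) • (x.1 : (EuclideanSpace ℝ (Fin N))×(EuclideanSpace ℝ (Fin N))).2 + ((x.2:ℝ) * s) • (‖(x.1 : (EuclideanSpace ℝ (Fin N))×(EuclideanSpace ℝ (Fin N))).1 - (x.1 : (EuclideanSpace ℝ (Fin N))×(EuclideanSpace ℝ (Fin N))).2‖⁻¹ • ((x.1 : (EuclideanSpace ℝ (Fin N))×(EuclideanSpace ℝ (Fin N))).2 - (x.1 : (EuclideanSpace ℝ (Fin N))×(EuclideanSpace ℝ (Fin N))).1)))) :=
    (((continuous_const.sub ht).smul h1).add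
        ((ht.mul continuous_const).smul (hinv.smul hdc))).prodMk
      (((continuous_const.sub ht).smul h2).add
        ((ht.mul continuous_const).smul (hinv.smul (h2.sub h1))))
  -- the homotopy as a continuous map into the subtype
  let Hmap : C(↥(ETwo r Ω) × unitInterval, ↥(ETwo r Ω)) :=
    ⟨fun x => ⟨((1 - (x.2:ℝ)) • (x.1 : (EuclideanSpace ℝ (Fin N))×(EuclideanSpace ℝ (Fin N))).1 + ((x.2:ℝ) * s) • (‖(x.1 : (EuclideanSpace ℝ (Fin N))×(EuclideanSpace ℝ (Fin N))).1 - (x.1 : (EuclideanSpace ℝ (Fin N))×(EuclideanSpace ℝ (Fin N))).2‖⁻¹ • ((x.1 : (EuclideanSpace ℝ (Fin N))×(EuclideanSpace ℝ (Fin N))).1 - (x.1 : (EuclideanSpace ℝ (Fin N))×(EuclideanSpace ℝ (Fin N))).2)),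
       (1 - (x.2:ℝ)) • (x.1 : (EuclideanSpace ℝ (Fin N))×(EuclideanSpace ℝ (Fin N))).2 + ((x.2:ℝ) * s) • (‖(x.1 : (EuclideanSpace ℝ (Fin N))×(EuclideanSpace ℝ (Fin N))).1 - (x.1 : (EuclideanSpace ℝ (Fin N))×(EuclideanSpace ℝ (Fin N))).2‖⁻¹ • ((x.1 : (EuclideanSpace ℝ (Fin N))×(EuclideanSpace ℝ (Fin N))).2 - (x.1 : (EuclideanSpace ℝ (Fin N))×(EuclideanSpace ℝ (Fin N))).1))),
        part1 _ x.1.2 _ x.2.2⟩,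
      hcont.subtype_mk (fun x => part1 _ x.1.2 _ x.2.2)⟩
  have hH0 : ∀ q : ↥(ETwo r Ω), Hmap (q, 0) = q := by
    intro q
    apply Subtype.ext
    show ((1 - ((0:unitInterval):ℝ)) • _ + _, _) = _
    simp [Hmap]
  have hH1 : ∀ q : ↥(ETwo r Ω),
      ((Hmap (q, 1) : (EuclideanSpace ℝ (Fin N)) × (EuclideanSpace ℝ (Fin N))))
        = (s • (‖(q : (EuclideanSpace ℝ (Fin N))×(EuclideanSpace ℝ (Fin N))).1 - (q : (EuclideanSpace ℝ (Fin N))×(EuclideanSpace ℝ (Fin N))).2‖⁻¹ • ((q : (EuclideanSpace ℝ (Fin N))×(EuclideanSpace ℝ (Fin N))).1 - (q : (EuclideanSpace ℝ (Fin N))×(EuclideanSpace ℝ (Fin N))).2)),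
           -(s • (‖(q : (EuclideanSpace ℝ (Fin N))×(EuclideanSpace ℝ (Fin N))).1 - (q : (EuclideanSpace ℝ (Fin N))×(EuclideanSpace ℝ (Fin N))).2‖⁻¹ • ((q : (EuclideanSpace ℝ (Fin N))×(EuclideanSpace ℝ (Fin N))).1 - (q : (EuclideanSpace ℝ (Fin N))×(EuclideanSpace ℝ (Fin N))).2)))) := by
    intro q
    have hba : (q : (EuclideanSpace ℝ (Fin N))×(EuclideanSpace ℝ (Fin N))).2 - (q : (EuclideanSpace ℝ (Fin N))×(EuclideanSpace ℝ (Fin N))).1 = -((q : (EuclideanSpace ℝ (Fin N))×(EuclideanSpace ℝ (Fin N))).1 - (q : (EuclideanSpace ℝ (Fin N))×(EuclideanSpace ℝ (Fin N))).2) :=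
      (neg_sub _ _).symm
    show ((1 - ((1:unitInterval):ℝ)) • _ + _, _) = _
    simp only [Hmap, ContinuousMap.coe_mk, Set.Icc.coe_one, sub_self, zero_smul, zero_add,
      one_mul, hba, smul_neg]
  -- the map to the sphere
  have hf1 : Continuous fun q : ↥(ETwo r Ω) => (q : (EuclideanSpace ℝ (Fin N))×(EuclideanSpace ℝ (Fin N))).1 := by fun_prop
  have hf2 : Continuous fun q : ↥(ETwo r Ω) => (q : (EuclideanSpace ℝ (Fin N))×(EuclideanSpace ℝ (Fin N))).2 := by fun_prop
  have hfd : Continuous fun q : ↥(ETwo r Ω) => (q : (EuclideanSpace ℝ (Fin N))×(EuclideanSpace ℝ (Fin N))).1 - (q : (EuclideanSpace ℝ (Fin N))×(EuclideanSpace ℝ (Fin N))).2 := hf1.sub hf2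
  have hfinv : Continuous fun q : ↥(ETwo r Ω) =>
      ‖(q : (EuclideanSpace ℝ (Fin N))×(EuclideanSpace ℝ (Fin N))).1 - (q : (EuclideanSpace ℝ (Fin N))×(EuclideanSpace ℝ (Fin N))).2‖⁻¹ := hfd.norm.inv₀ hnq
  have hfmem : ∀ q : ↥(ETwo r Ω),
      ‖(q : (EuclideanSpace ℝ (Fin N))×(EuclideanSpace ℝ (Fin N))).1 - (q : (EuclideanSpace ℝ (Fin N))×(EuclideanSpace ℝ (Fin N))).2‖⁻¹ • ((q : (EuclideanSpace ℝ (Fin N))×(EuclideanSpace ℝ (Fin N))).1 - (q : (EuclideanSpace ℝ (Fin N))×(EuclideanSpace ℝ (Fin N))).2)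
        ∈ sphere (0 : (EuclideanSpace ℝ (Fin N))) 1 := by
    intro q
    rw [mem_sphere_zero_iff_norm, norm_smul, Real.norm_eq_abs,
      abs_of_nonneg (inv_nonneg.mpr (norm_nonneg _)), inv_mul_cancel₀ (hnq q)]
  let f : C(↥(ETwo r Ω), ↥(sphere (0 : (EuclideanSpace ℝ (Fin N))) 1)) :=
    ⟨fun q => ⟨‖(q : (EuclideanSpace ℝ (Fin N))×(EuclideanSpace ℝ (Fin N))).1 - (q : (EuclideanSpace ℝ (Fin N))×(EuclideanSpace ℝ (Fin N))).2‖⁻¹ • ((q : (EuclideanSpace ℝ (Fin N))×(EuclideanSpace ℝ (Fin N))).1 - (q : (EuclideanSpace ℝ (Fin N))×(EuclideanSpace ℝ (Fin N))).2),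
        hfmem q⟩,
      (hfinv.smul hfd).subtype_mk hfmem⟩
  -- the map from the sphere
  have hgmem : ∀ x : ↥(sphere (0 : (EuclideanSpace ℝ (Fin N))) 1),
      ((s • (x : (EuclideanSpace ℝ (Fin N))), -(s • (x : (EuclideanSpace ℝ (Fin N))))) : (EuclideanSpace ℝ (Fin N)) × (EuclideanSpace ℝ (Fin N))) ∈ ETwo r Ω := by
    intro x
    have hnx : ‖(x : (EuclideanSpace ℝ (Fin N)))‖ = 1 := mem_sphere_zero_iff_norm.mp x.2
    have hnw : ‖s • (x : (EuclideanSpace ℝ (Fin N)))‖ = s := by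
      rw [norm_smul, Real.norm_eq_abs, abs_of_pos hs, hnx, mul_one]
    have hw := hball (by rw [mem_closedBall, dist_zero_right, hnw])
    have hw' := hball (show -(s • (x : (EuclideanSpace ℝ (Fin N)))) ∈ closedBall (0 : (EuclideanSpace ℝ (Fin N))) s by
      rw [mem_closedBall, dist_zero_right, norm_neg, hnw])
    refine ⟨hw.1, hw'.1, by linarith [hw.2], by linarith [hw'.2], ?_⟩
    have : -(s • (x : (EuclideanSpace ℝ (Fin N)))) - s • (x : (EuclideanSpace ℝ (Fin N))) = (-(2 * s)) • (x : (EuclideanSpace ℝ (Fin N))) := by module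
    rw [dist_eq_norm, this, norm_smul, Real.norm_eq_abs, abs_neg,
      abs_of_pos (by linarith : (0:ℝ) < 2 * s), hnx, mul_one]
    linarith
  let g : C(↥(sphere (0 : (EuclideanSpace ℝ (Fin N))) 1), ↥(ETwo r Ω)) :=
    ⟨fun x => ⟨(s • (x : (EuclideanSpace ℝ (Fin N))), -(s • (x : (EuclideanSpace ℝ (Fin N))))), hgmem x⟩,
      ((continuous_subtype_val.const_smul s : Continuous fun x : ↥(sphere (0 : (EuclideanSpace ℝ (Fin N))) 1) => s • (x : (EuclideanSpace ℝ (Fin N)))).prodMk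
        (continuous_subtype_val.const_smul s : Continuous fun x : ↥(sphere (0 : (EuclideanSpace ℝ (Fin N))) 1) => s • (x : (EuclideanSpace ℝ (Fin N)))).neg).subtype_mk hgmem⟩
  -- f ∘ g = id
  have hfg : f.comp g = ContinuousMap.id _ := by
    apply ContinuousMap.ext
    intro x
    apply Subtype.ext
    have hnx : ‖(x : (EuclideanSpace ℝ (Fin N)))‖ = 1 := mem_sphere_zero_iff_norm.mp x.2
    show ‖s • (x : (EuclideanSpace ℝ (Fin N))) - -(s • (x : (EuclideanSpace ℝ (Fin N))))‖⁻¹ • (s • (x : (EuclideanSpace ℝ (Fin N))) - -(s • (x : (EuclideanSpace ℝ (Fin N))))) = (x : (EuclideanSpace ℝ (Fin N)))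
    have hsub : s • (x : (EuclideanSpace ℝ (Fin N))) - -(s • (x : (EuclideanSpace ℝ (Fin N)))) = (2 * s) • (x : (EuclideanSpace ℝ (Fin N))) := by module
    rw [hsub, norm_smul, Real.norm_eq_abs, abs_of_pos (by linarith : (0:ℝ) < 2 * s),
      hnx, mul_one, smul_smul, inv_mul_cancel₀ (by linarith : (2:ℝ) * s ≠ 0), one_smul]
  -- g ∘ f is homotopic to the identity via Hmap
  have hgf : ∀ q : ↥(ETwo r Ω), Hmap (q, 1) = (g.comp f) q := by
    intro q
    apply Subtype.ext
    rw [hH1 q]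
    rfl
  let Ht : ContinuousMap.Homotopy (ContinuousMap.id ↥(ETwo r Ω)) (g.comp f) :=
    { toContinuousMap := ⟨fun p => Hmap (p.2, p.1),
        Hmap.continuous.comp (continuous_snd.prodMk continuous_fst)⟩,
      map_zero_left := fun q => hH0 q,
      map_one_left := fun q => hgf q }
  refine ⟨part1, ⟨Hmap, fun q t => rfl, hH0, hH1⟩, ⟨⟨f, g, ⟨Ht.symm⟩, hfg ▸ ContinuousMap.Homotopic.refl _⟩⟩⟩
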